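/- arXiv:2309.13850 — 2 statements merged into one kernel-verified Lean document; each statement's English description precedes it below -/
import Mathlib

section
/- Suppose Softmax(u) = Softmax(v) for all inputs of the form u_i = β_iᵀx + b_i and v_i = β_i'ᵀx + b_i' ranging over x in a set of positive Lebesgue measure in ℝᵈ, where Softmax: ℝᵏ → ℝᵏ is the softmax function. Then there exist c₁ ∈ ℝᵈ and c₀ ∈ ℝ such that β_i = β_i' + c₁ and b_i = b_i' + c₀ for all i ∈ {1,…,k}. Moreover, if additionally β_k = β_k' = 0 and b_k = b_k' = 0, then β_i = β_i' and b_i = b_i' for all i. -/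
open Finset MeasureTheory RealInnerProductSpace

/-- The softmax function on `ℝᵏ`. -/
noncomputable def softmax (k : ℕ) (v : Fin k → ℝ) : Fin k → ℝ :=
  fun i => Real.exp (v i) / ∑ j, Real.exp (v j)

lemma affine_vanish {d : ℕ} (a : EuclideanSpace ℝ (Fin d)) (c : ℝ)
    (S : Set (EuclideanSpace ℝ (Fin d))) (hS : 0 < volume S)
    (h : ∀ x ∈ S, ⟪a, x⟫ + c = 0) : a = 0 ∧ c = 0 := by
  have ha : a = 0 := by
    by_contra ha
    have hna : (0:ℝ) < ‖a‖^2 := pow_pos (norm_pos_iff.mpr ha) 2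
    set K : Submodule ℝ (EuclideanSpace ℝ (Fin d)) :=
      LinearMap.ker ((innerSL ℝ a : EuclideanSpace ℝ (Fin d) →L[ℝ] ℝ) : _ →ₗ[ℝ] ℝ)
    have hK : K ≠ ⊤ := by
      intro htop
      have : a ∈ K := htop ▸ Submodule.mem_top
      have : ⟪a, a⟫ = 0 := this
      rw [real_inner_self_eq_norm_sq] at this
      linarith
    set x₀ : EuclideanSpace ℝ (Fin d) := (-c / ‖a‖^2) • a
    have hx₀ : ⟪a, x₀⟫ = -c := by
      rw [real_inner_smul_right, real_inner_self_eq_norm_sq]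
      field_simp
    have hsub : S ⊆ (fun x => x + (-x₀)) ⁻¹' (K : Set (EuclideanSpace ℝ (Fin d))) := by
      intro x hx
      have := h x hx
      simp only [Set.mem_preimage, SetLike.mem_coe, LinearMap.mem_ker]
      show ⟪a, x + (-x₀)⟫ = 0
      rw [inner_add_right, inner_neg_right, hx₀]
      linarith
    have h0 : volume (K : Set (EuclideanSpace ℝ (Fin d))) = 0 :=
      Measure.addHaar_submodule volume K hK
    have : volume S = 0 := by
      refine measure_mono_null hsub ?_
      rw [measure_preimage_add_right]
      exact h0
    exact absurd this hS.ne'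
  refine ⟨ha, ?_⟩
  obtain ⟨x, hx⟩ := nonempty_of_measure_ne_zero hS.ne'
  have := h x hx
  rw [ha, inner_zero_left] at this
  linarith

/-- If the softmax of two affine-in-`x` score vectors agree for `x` in a set of
positive Lebesgue measure, then the parameters agree up to a common translation;
under the normalization that the last parameters vanish, they agree exactly. -/
theorem softmax_affine_eq_iff_translation
    (d k : ℕ) (β β' : Fin (k + 1) → EuclideanSpace ℝ (Fin d))
    (b b' : Fin (k + 1) → ℝ)
    (S : Set (EuclideanSpace ℝ (Fin d))) (hS : 0 < volume S)
    (heq : ∀ x ∈ S,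
      softmax (k + 1) (fun i => ⟪β i, x⟫ + b i) =
        softmax (k + 1) (fun i => ⟪β' i, x⟫ + b' i)) :
    (∃ (c₁ : EuclideanSpace ℝ (Fin d)) (c₀ : ℝ),
      ∀ i, β i = β' i + c₁ ∧ b i = b' i + c₀) ∧
    (β (Fin.last k) = 0 → β' (Fin.last k) = 0 →
      b (Fin.last k) = 0 → b' (Fin.last k) = 0 →
      ∀ i, β i = β' i ∧ b i = b' i) := by
  set L := Fin.last k
  have key : ∀ i, β i - β L = β' i - β' L ∧ b i - b L = b' i - b' L := by
    intro i
    have hpt : ∀ x ∈ S,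
        ⟪β i - β L, x⟫ + (b i - b L) - (⟪β' i - β' L, x⟫ + (b' i - b' L)) = 0 := by
      intro x hx
      have h := heq x hx
      have h1 := congrFun h i
      have h2 := congrFun h L
      simp only [softmax] at h1 h2
      set ui := ⟪β i, x⟫ + b i with hui
      set uL := ⟪β L, x⟫ + b L with huL
      set vi := ⟪β' i, x⟫ + b' i with hvi
      set vL := ⟪β' L, x⟫ + b' L with hvL
      set A := ∑ j, Real.exp (⟪β j, x⟫ + b j) with hA
      set B := ∑ j, Real.exp (⟪β' j, x⟫ + b' j) with hB
      have hA0 : 0 < A := Finset.sum_pos (fun j _ => Real.exp_pos _) Finset.univ_nonempty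
      have hB0 : 0 < B := Finset.sum_pos (fun j _ => Real.exp_pos _) Finset.univ_nonempty
      have h1' : Real.exp ui * B = Real.exp vi * A := by
        rw [div_eq_div_iff hA0.ne' hB0.ne'] at h1; exact h1
      have h2' : Real.exp uL * B = Real.exp vL * A := by
        rw [div_eq_div_iff hA0.ne' hB0.ne'] at h2; exact h2
      have hexp : Real.exp (ui - uL) = Real.exp (vi - vL) := by
        rw [Real.exp_sub, Real.exp_sub, div_eq_div_iff (Real.exp_pos uL).ne' (Real.exp_pos vL).ne']
        nlinarith [Real.exp_pos ui, Real.exp_pos vi, Real.exp_pos uL, Real.exp_pos vL]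
      have := Real.exp_eq_exp.mp hexp
      rw [inner_sub_left, inner_sub_left]
      linarith
    obtain ⟨ha, hc⟩ := affine_vanish ((β i - β L) - (β' i - β' L))
      ((b i - b L) - (b' i - b' L)) S hS (by
        intro x hx
        have := hpt x hx
        rw [inner_sub_left]
        rw [inner_sub_left, inner_sub_left] at this ⊢
        linarith)
    constructor
    · have h' : (β i - β L) - (β' i - β' L) = 0 := ha
      have := sub_eq_zero.mp h'
      exact this
    · linarith
  constructor
  · refine ⟨β L - β' L, b L - b' L, fun i => ⟨?_, ?_⟩⟩
    · have h' := (key i).1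
      rw [eq_add_of_sub_eq h']
      abel
    · linarith [(key i).2]
  · intro h1 h2 h3 h4 i
    have := key i
    rw [h1, h2, h3, h4] at this
    constructor
    · have h' := this.1
      simpa using h'
    · linarith [this.2]
end

section
/- Finite mixtures of univariate location-scale Gaussian densities are identifiable: if ∑_{i=1}^k π_i f(y|μ_i, σ_i) = ∑_{i=1}^{k'} π_i' f(y|μ_i', σ_i') for all y ∈ ℝ, where f(y|μ,σ) is the Gaussian density with mean μ and variance σ, π_i, π_i' > 0 sum to 1 respectively, and the pairs (μ_i, σ_i) are pairwise distinct as are the (μ_i', σ_i'), then k = k' and there is a permutation τ of {1,…,k} with π_i = π_{τ(i)}', μ_i = μ_{τ(i)}', σ_i = σ_{τ(i)}' for all i. -/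
open Finset

open Filter

/-- Univariate Gaussian density with mean `μ` and variance `σ`. -/
noncomputable def gaussianDensity (y μ σ : ℝ) : ℝ :=
  (1 / Real.sqrt (2 * Real.pi * σ)) * Real.exp (-(y - μ) ^ 2 / (2 * σ))

/-- exp(α y² + β y) → 0 as y → ∞ when (α, β) < (0,0) lexicographically. -/
lemma exp_quad_tendsto_zero {α β : ℝ} (h : α < 0 ∨ (α = 0 ∧ β < 0)) :
    Tendsto (fun y : ℝ => Real.exp (α * y ^ 2 + β * y)) atTop (nhds 0) := by
  rcases h with h | ⟨h0, hβ⟩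
  · have h1 : Tendsto (fun y : ℝ => α * y + β) atTop atBot := by
      apply tendsto_atBot_add_const_right
      exact (tendsto_const_mul_atBot_of_neg h).mpr tendsto_id
    have h2 : Tendsto (fun y : ℝ => y * (α * y + β)) atTop atBot :=
      tendsto_id.atTop_mul_atBot₀ h1
    have h3 : Tendsto (fun y : ℝ => α * y ^ 2 + β * y) atTop atBot := by
      refine h2.congr fun y => by ring
    exact Real.tendsto_exp_atBot.comp h3
  · subst h0
    have h3 : Tendsto (fun y : ℝ => 0 * y ^ 2 + β * y) atTop atBot := by
      have := (tendsto_const_mul_atBot_of_neg hβ).mpr (tendsto_id (α := ℝ))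
      exact this.congr fun y => by simp
    exact Real.tendsto_exp_atBot.comp h3

/-- Linear independence of y ↦ exp(a y² + b y) for distinct pairs (a, b). -/
lemma exp_indep {ι : Type*} [DecidableEq ι] (s : Finset ι) (a b c : ι → ℝ)
    (hinj : ∀ i ∈ s, ∀ j ∈ s, a i = a j → b i = b j → i = j)
    (hsum : ∀ y : ℝ, ∑ i ∈ s, c i * Real.exp (a i * y ^ 2 + b i * y) = 0) :
    ∀ i ∈ s, c i = 0 := by
  induction s using Finset.strongInduction with
  | _ s ih =>
    rcases s.eq_empty_or_nonempty with rfl | hne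
    · simp
    obtain ⟨i₀, hi₀, hmax⟩ := s.exists_max_image (fun i => toLex (a i, b i)) hne
    -- the maximal term has coefficient 0
    have hc0 : c i₀ = 0 := by
      have key : ∀ y : ℝ, c i₀ =
          -∑ i ∈ s.erase i₀, c i * Real.exp ((a i - a i₀) * y ^ 2 + (b i - b i₀) * y) := by
        intro y
        have h1 := hsum y
        have h2 : ∑ i ∈ s, c i * Real.exp ((a i - a i₀) * y ^ 2 + (b i - b i₀) * y) = 0 := by
          have := congrArg (· * Real.exp (-(a i₀ * y ^ 2 + b i₀ * y))) h1
          simp only [Finset.sum_mul, zero_mul] at this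
          rw [← this]
          apply Finset.sum_congr rfl
          intro i _
          rw [mul_assoc, ← Real.exp_add]
          ring_nf
        rw [← Finset.add_sum_erase _ _ hi₀] at h2
        simp only [sub_self, zero_mul, add_zero, Real.exp_zero, mul_one] at h2
        linarith
      have hlim : Tendsto (fun y : ℝ =>
          -∑ i ∈ s.erase i₀, c i * Real.exp ((a i - a i₀) * y ^ 2 + (b i - b i₀) * y))
          atTop (nhds 0) := by
        rw [show (0 : ℝ) = -∑ i ∈ s.erase i₀, c i * 0 by simp]
        apply Tendsto.neg
        apply tendsto_finset_sum
        intro i hi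
        have his : i ∈ s := Finset.mem_of_mem_erase hi
        have hne' : i ≠ i₀ := Finset.ne_of_mem_erase hi
        have hlt : toLex (a i, b i) < toLex (a i₀, b i₀) := by
          refine lt_of_le_of_ne (hmax i his) ?_
          intro hEq
          have h1 : a i = a i₀ ∧ b i = b i₀ := by
            have := congrArg (fun p => (ofLex p).1) hEq
            have := congrArg (fun p => (ofLex p).2) hEq
            constructor <;> simp_all
          exact hne' (hinj i his i₀ hi₀ h1.1 h1.2)
        rw [Prod.Lex.lt_iff] at hlt
        have : a i - a i₀ < 0 ∨ (a i - a i₀ = 0 ∧ b i - b i₀ < 0) := by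
          rcases hlt with h | ⟨h1, h2⟩
          · left; simpa [sub_neg] using h
          · right; constructor <;> simp_all [sub_eq_zero]
        exact (tendsto_const_nhds (x := c i)).mul (exp_quad_tendsto_zero this) |>.congr
          (fun y => rfl) |>.mono_right (by rw [mul_zero])
      have hconst : Tendsto (fun _ : ℝ => c i₀) atTop (nhds 0) := by
        refine hlim.congr fun y => (key y).symm
      exact tendsto_nhds_unique tendsto_const_nhds hconst
    intro i hi
    rcases eq_or_ne i i₀ with rfl | hne'
    · exact hc0
    · refine ih (s.erase i₀) (Finset.erase_ssubset hi₀)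
        (fun i hi j hj => hinj i (Finset.mem_of_mem_erase hi) j (Finset.mem_of_mem_erase hj))
        (fun y => ?_) i (Finset.mem_erase.mpr ⟨hne', hi⟩)
      have := hsum y
      rw [← Finset.add_sum_erase _ _ hi₀, hc0, zero_mul, zero_add] at this
      exact this

lemma gauss_indep (P : Finset (ℝ × ℝ)) (C : ℝ × ℝ → ℝ) (hpos : ∀ p ∈ P, 0 < p.2)
    (h : ∀ y : ℝ, ∑ p ∈ P, C p * gaussianDensity y p.1 p.2 = 0) :
    ∀ p ∈ P, C p = 0 := by
  have main := exp_indep P (fun p => -(1 / (2 * p.2))) (fun p => p.1 / p.2)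
    (fun p => C p * ((1 / Real.sqrt (2 * Real.pi * p.2)) * Real.exp (-(p.1 ^ 2) / (2 * p.2))))
    ?_ ?_
  · intro p hp
    have := main p hp
    have hσ := hpos p hp
    have h1 : 0 < Real.sqrt (2 * Real.pi * p.2) :=
      Real.sqrt_pos.mpr (by positivity)
    have h2 : (1 / Real.sqrt (2 * Real.pi * p.2)) * Real.exp (-(p.1 ^ 2) / (2 * p.2)) ≠ 0 := by
      positivity
    exact (mul_eq_zero.mp this).resolve_right h2
  · intro p hp q hq ha hb
    have hp2 := hpos p hp
    have hq2 := hpos q hq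
    have h2 : p.2 = q.2 := by
      field_simp at ha
      linarith
    have h1 : p.1 = q.1 := by
      rw [div_eq_div_iff (ne_of_gt hp2) (ne_of_gt hq2)] at hb
      rw [h2] at hb
      exact mul_right_cancel₀ (ne_of_gt hq2) hb
    exact Prod.ext h1 h2
  · intro y
    rw [← h y]
    apply Finset.sum_congr rfl
    intro p hp
    have hσ := hpos p hp
    rw [mul_assoc, mul_assoc, ← Real.exp_add]
    unfold gaussianDensity
    congr 1
    field_simp
    ring


/-- Identifiability of finite mixtures of location-scale Gaussian densities. -/
theorem gaussian_mixture_identifiable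
    (k k' : ℕ) (π πp : ℕ → ℝ) (μ μp σ σp : ℕ → ℝ)
    (hπ : ∀ i < k, 0 < π i) (hπp : ∀ i < k', 0 < πp i)
    (hσ : ∀ i < k, 0 < σ i) (hσp : ∀ i < k', 0 < σp i)
    (hsum : ∑ i ∈ range k, π i = 1) (hsum' : ∑ i ∈ range k', πp i = 1)
    (hdist : ∀ i < k, ∀ j < k, i ≠ j → (μ i, σ i) ≠ (μ j, σ j))
    (hdist' : ∀ i < k', ∀ j < k', i ≠ j → (μp i, σp i) ≠ (μp j, σp j))
    (heq : ∀ y : ℝ,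
      ∑ i ∈ range k, π i * gaussianDensity y (μ i) (σ i) =
        ∑ i ∈ range k', πp i * gaussianDensity y (μp i) (σp i)) :
    k = k' ∧ ∃ τ : Equiv.Perm ℕ, ∀ i < k, τ i < k' ∧
      π i = πp (τ i) ∧ μ i = μp (τ i) ∧ σ i = σp (τ i) := by
  classical
  set φ : ℕ → ℝ × ℝ := fun i => (μ i, σ i) with hφdef
  set ψ : ℕ → ℝ × ℝ := fun j => (μp j, σp j) with hψdef
  set P : Finset (ℝ × ℝ) := (range k).image φ ∪ (range k').image ψ with hPdef
  set C : ℝ × ℝ → ℝ := fun p =>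
    (∑ i ∈ (range k).filter (fun i => φ i = p), π i) -
      (∑ j ∈ (range k').filter (fun j => ψ j = p), πp j) with hCdef
  have hpos : ∀ p ∈ P, 0 < p.2 := by
    intro p hp
    rw [hPdef, Finset.mem_union] at hp
    rcases hp with hp | hp <;> obtain ⟨i, hi, rfl⟩ := Finset.mem_image.mp hp
    · exact hσ i (mem_range.mp hi)
    · exact hσp i (mem_range.mp hi)
  have hmaps1 : ∀ i ∈ range k, φ i ∈ P :=
    fun i hi => Finset.mem_union_left _ (Finset.mem_image_of_mem φ hi)
  have hmaps2 : ∀ j ∈ range k', ψ j ∈ P :=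
    fun j hj => Finset.mem_union_right _ (Finset.mem_image_of_mem ψ hj)
  have split1 : ∀ y : ℝ, ∑ p ∈ P,
      (∑ i ∈ (range k).filter (fun i => φ i = p), π i) * gaussianDensity y p.1 p.2 =
      ∑ i ∈ range k, π i * gaussianDensity y (μ i) (σ i) := by
    intro y
    rw [← Finset.sum_fiberwise_of_maps_to hmaps1
      (fun i => π i * gaussianDensity y (μ i) (σ i))]
    refine Finset.sum_congr rfl fun p _ => ?_
    rw [Finset.sum_mul]
    refine Finset.sum_congr rfl fun i hi => ?_
    obtain ⟨_, hphi⟩ := Finset.mem_filter.mp hi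
    rw [← hphi]
  have split2 : ∀ y : ℝ, ∑ p ∈ P,
      (∑ j ∈ (range k').filter (fun j => ψ j = p), πp j) * gaussianDensity y p.1 p.2 =
      ∑ j ∈ range k', πp j * gaussianDensity y (μp j) (σp j) := by
    intro y
    rw [← Finset.sum_fiberwise_of_maps_to hmaps2
      (fun j => πp j * gaussianDensity y (μp j) (σp j))]
    refine Finset.sum_congr rfl fun p _ => ?_
    rw [Finset.sum_mul]
    refine Finset.sum_congr rfl fun j hj => ?_
    obtain ⟨_, hphi⟩ := Finset.mem_filter.mp hj
    rw [← hphi]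
  have key : ∀ y : ℝ, ∑ p ∈ P, C p * gaussianDensity y p.1 p.2 = 0 := by
    intro y
    simp only [hCdef, sub_mul, Finset.sum_sub_distrib]
    rw [split1 y, split2 y, heq y, sub_self]
  have hC : ∀ p ∈ P, C p = 0 := gauss_indep P C hpos key
  -- fibers are singletons
  have fib1 : ∀ i < k, (range k).filter (fun i' => φ i' = φ i) = {i} := by
    intro i hik
    ext j
    simp only [Finset.mem_filter, Finset.mem_range, Finset.mem_singleton]
    constructor
    · rintro ⟨hjk, hφj⟩
      by_contra hne
      exact hdist j hjk i hik hne hφj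
    · rintro rfl; exact ⟨hik, rfl⟩
  have fib2 : ∀ j < k', (range k').filter (fun j' => ψ j' = ψ j) = {j} := by
    intro j hjk
    ext i
    simp only [Finset.mem_filter, Finset.mem_range, Finset.mem_singleton]
    constructor
    · rintro ⟨hik, hψi⟩
      by_contra hne
      exact hdist' i hik j hjk hne hψi
    · rintro rfl; exact ⟨hjk, rfl⟩
  -- matching from left to right
  have match1 : ∀ i, ∃ j, i < k → j < k' ∧ ψ j = φ i ∧ πp j = π i := by
    intro i
    by_cases hik : i < k
    · have h0 := hC (φ i) (hmaps1 i (mem_range.mpr hik))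
      rw [hCdef] at h0
      simp only [fib1 i hik, Finset.sum_singleton] at h0
      have hsum2 : ∑ j ∈ (range k').filter (fun j => ψ j = φ i), πp j = π i := by linarith
      have hne0 : ∑ j ∈ (range k').filter (fun j => ψ j = φ i), πp j ≠ 0 := by
        rw [hsum2]; exact ne_of_gt (hπ i hik)
      obtain ⟨j, hj⟩ := Finset.nonempty_of_sum_ne_zero hne0
      obtain ⟨hjk', hψj⟩ := Finset.mem_filter.mp hj
      rw [Finset.mem_range] at hjk'
      have hfilt : (range k').filter (fun j' => ψ j' = φ i) = {j} := by
        rw [← hψj]; exact fib2 j hjk'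
      rw [hfilt, Finset.sum_singleton] at hsum2
      exact ⟨j, fun _ => ⟨hjk', hψj, hsum2⟩⟩
    · exact ⟨0, fun h => absurd h hik⟩
  -- matching from right to left (existence only)
  have match2 : ∀ j, ∃ i, j < k' → i < k ∧ φ i = ψ j := by
    intro j
    by_cases hjk' : j < k'
    case neg => exact ⟨0, fun h => absurd h hjk'⟩
    have h0 := hC (ψ j) (hmaps2 j (mem_range.mpr hjk'))
    rw [hCdef] at h0
    simp only [fib2 j hjk', Finset.sum_singleton] at h0
    have hsum1 : ∑ i ∈ (range k).filter (fun i => φ i = ψ j), π i = πp j := by linarith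
    have hne0 : ∑ i ∈ (range k).filter (fun i => φ i = ψ j), π i ≠ 0 := by
      rw [hsum1]; exact ne_of_gt (hπp j hjk')
    obtain ⟨i, hi⟩ := Finset.nonempty_of_sum_ne_zero hne0
    obtain ⟨hik, hφi⟩ := Finset.mem_filter.mp hi
    exact ⟨i, fun _ => ⟨mem_range.mp hik, hφi⟩⟩
  choose m hm using match1
  choose m' hm' using match2
  have minj : ∀ i₁ < k, ∀ i₂ < k, m i₁ = m i₂ → i₁ = i₂ := by
    intro i₁ h₁ i₂ h₂ hmm
    by_contra hne
    apply hdist i₁ h₁ i₂ h₂ hne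
    have e1 := (hm i₁ h₁).2.1
    have e2 := (hm i₂ h₂).2.1
    rw [hmm] at e1
    have : φ i₁ = φ i₂ := by rw [← e1, e2]
    exact this
  have hk1 : k ≤ k' := by
    have := Finset.card_le_card_of_injOn m
      (fun i hi => mem_range.mpr (hm i (mem_range.mp hi)).1)
      (fun i₁ h₁ i₂ h₂ => minj i₁ (mem_range.mp h₁) i₂ (mem_range.mp h₂))
    simpa using this
  have hk2 : k' ≤ k := by
    have := Finset.card_le_card_of_injOn m'
      (fun j hj => mem_range.mpr (hm' j (mem_range.mp hj)).1)
      ?_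
    · simpa using this
    · intro j₁ h₁ j₂ h₂ hmm
      rw [Finset.mem_coe, Finset.mem_range] at h₁ h₂
      by_contra hne
      apply hdist' j₁ h₁ j₂ h₂ hne
      have e1 := (hm' j₁ h₁).2
      have e2 := (hm' j₂ h₂).2
      rw [hmm] at e1
      have : ψ j₁ = ψ j₂ := by rw [← e1, e2]
      exact this
  have hkk' : k = k' := le_antisymm hk1 hk2
  refine ⟨hkk', ?_⟩
  -- build the permutation
  have hmlt : ∀ i : Fin k, m i.1 < k := fun i => hkk' ▸ (hm i.1 i.2).1
  set g : Fin k → Fin k := fun i => ⟨m i.1, hmlt i⟩ with hgdef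
  have ginj : Function.Injective g := by
    intro i₁ i₂ hg
    have : m i₁.1 = m i₂.1 := congrArg Fin.val hg
    exact Fin.ext (minj i₁.1 i₁.2 i₂.1 i₂.2 this)
  have gbij : Function.Bijective g := Finite.injective_iff_bijective.mp ginj
  set e : Fin k ≃ Fin k := Equiv.ofBijective g gbij with hedef
  refine ⟨Equiv.Perm.extendDomain e (Fin.equivSubtype (n := k)), ?_⟩
  intro i hik
  have hτ : (Equiv.Perm.extendDomain e (Fin.equivSubtype (n := k))) i = m i := by
    have h2 := Equiv.Perm.extendDomain_apply_subtype e (Fin.equivSubtype (n := k))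
      (p := fun n => n < k) (b := i) hik
    rw [h2]
    simp [hedef, Fin.equivSubtype, Equiv.ofBijective, hgdef]
  rw [hτ]
  obtain ⟨hjk', hψj, hπj⟩ := hm i hik
  have hμσ : μp (m i) = μ i ∧ σp (m i) = σ i := by
    have := hψj
    rw [hψdef, hφdef] at this
    exact ⟨congrArg Prod.fst this, congrArg Prod.snd this⟩
  exact ⟨hjk', hπj.symm, hμσ.1.symm, hμσ.2.symm⟩
end
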